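/- Empirical conditional mean embedding formula: let v_1, …, v_n ∈ H, w_1, …, w_n ∈ G, λ > 0, and u ∈ H. Define the empirical covariance operator Ĉ_XX : H → H, f ↦ (1/n) Σ_i ⟨v_i, f⟩ v_i, the empirical cross-covariance operator Ĉ_YX : H → G, f ↦ (1/n) Σ_i ⟨v_i, f⟩ w_i, the Gram matrix K ∈ ℝ^{n×n} with K_{ij} = ⟨v_i, v_j⟩, and k_u ∈ ℝ^n with (k_u)_i = ⟨v_i, u⟩. Then K + nλ I_n is invertible, Ĉ_XX + λ·id_H is bijective, and for the unique h ∈ H with (Ĉ_XX + λ·id_H) h = u one has Ĉ_YX h = Σ_{i=1}^n β_i w_i, where β = (K + nλ I_n)^{−1} k_u. -/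

import Mathlib

open MeasureTheory
open scoped RealInnerProductSpace Matrix

section Aux

variable {H : Type*} [NormedAddCommGroup H] [InnerProductSpace ℝ H]

/-- The Gram-plus-ridge matrix is positive definite. -/
lemma aux_posDef (n : ℕ) (v : Fin n → H) (lam : ℝ) (hlam : 0 < lam) :
    (((Matrix.of fun i j => ⟪v i, v j⟫)
        + ((n : ℝ) * lam) • (1 : Matrix (Fin n) (Fin n) ℝ))).PosDef := by
  rw [Matrix.posDef_iff_dotProduct_mulVec]
  constructor
  · ext i j
    simp only [Matrix.conjTranspose_apply, Matrix.add_apply, Matrix.smul_apply,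
      Matrix.of_apply, Matrix.one_apply, star_trivial, smul_eq_mul]
    rcases eq_or_ne i j with rfl | hij
    · simp [real_inner_comm]
    · simp [hij, Ne.symm hij, real_inner_comm]
  · intro x hx
    obtain ⟨i0, hi0⟩ : ∃ i, x i ≠ 0 := by
      by_contra hc
      push_neg at hc
      exact hx (funext hc)
    have hn : 0 < (n : ℝ) := by
      have := i0.pos
      exact_mod_cast this
    have h1 : x ⬝ᵥ ((Matrix.of fun i j => ⟪v i, v j⟫) *ᵥ x)
        = ⟪∑ i, x i • v i, ∑ j, x j • v j⟫ := by
      simp only [dotProduct, Matrix.mulVec, sum_inner, inner_sum,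
        real_inner_smul_left, real_inner_smul_right, Matrix.of_apply, Finset.mul_sum]
      exact Finset.sum_congr rfl fun i _ => Finset.sum_congr rfl fun j _ => by
        rw [real_inner_comm (v j) (v i)]; ring
    have h2 : (0:ℝ) < x ⬝ᵥ (((n : ℝ) * lam) • x) := by
      simp only [dotProduct, Pi.smul_apply, smul_eq_mul]
      have : (0:ℝ) < ∑ i, x i * x i := by
        apply Finset.sum_pos' (fun i _ => mul_self_nonneg _)
        exact ⟨i0, Finset.mem_univ _, mul_self_pos.mpr hi0⟩
      calc (0:ℝ) < ((n:ℝ) * lam) * ∑ i, x i * x i := by positivity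
        _ = ∑ i, x i * (((n:ℝ) * lam) * x i) := by
            rw [Finset.mul_sum]; exact Finset.sum_congr rfl fun i _ => by ring
    have hstar : star x = x := rfl
    rw [hstar, Matrix.add_mulVec, Matrix.smul_mulVec, Matrix.one_mulVec,
      dotProduct_add, h1]
    have := real_inner_self_nonneg (x := ∑ i, x i • v i)
    linarith

/-- Solving the regularized system via the kernel trick. -/
lemma aux_solve (n : ℕ) (v : Fin n → H) (lam : ℝ) (hlam : 0 < lam) (u : H)
    (β : Fin n → ℝ)
    (hβ : ((Matrix.of fun i j => ⟪v i, v j⟫)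
        + ((n : ℝ) * lam) • (1 : Matrix (Fin n) (Fin n) ℝ)) *ᵥ β
        = fun i => ⟪v i, u⟫) :
    ((n : ℝ)⁻¹ • ∑ i, ⟪v i, lam⁻¹ • (u - ∑ j, β j • v j)⟫ • v i)
        + lam • (lam⁻¹ • (u - ∑ j, β j • v j)) = u := by
  have hc : ∀ i : Fin n, ⟪v i, lam⁻¹ • (u - ∑ j, β j • v j)⟫ = (n : ℝ) * β i := by
    intro i
    have hn : (n : ℝ) ≠ 0 := Nat.cast_ne_zero.mpr i.pos.ne'
    rw [Matrix.add_mulVec, Matrix.smul_mulVec, Matrix.one_mulVec] at hβ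
    have hi := congrFun hβ i
    simp only [Matrix.mulVec, dotProduct, Matrix.of_apply, Pi.add_apply,
      Pi.smul_apply, smul_eq_mul] at hi
    rw [real_inner_smul_right, inner_sub_right, inner_sum]
    simp only [real_inner_smul_right]
    have hsum : ∑ j, β j * ⟪v i, v j⟫ = ∑ j, ⟪v i, v j⟫ * β j :=
      Finset.sum_congr rfl fun j _ => mul_comm _ _
    rw [hsum]
    have : ∑ j, ⟪v i, v j⟫ * β j = ⟪v i, u⟫ - (n : ℝ) * lam * β i := by linarith
    rw [this]
    field_simp
    ring
  rw [smul_smul, mul_inv_cancel₀ hlam.ne', one_smul]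
  have hs : ((n : ℝ)⁻¹ • ∑ i, ⟪v i, lam⁻¹ • (u - ∑ j, β j • v j)⟫ • v i)
      = ∑ i, β i • v i := by
    rw [Finset.smul_sum]
    refine Finset.sum_congr rfl fun i _ => ?_
    have hn : (n : ℝ) ≠ 0 := Nat.cast_ne_zero.mpr i.pos.ne'
    rw [hc i, smul_smul, ← mul_assoc, inv_mul_cancel₀ hn, one_mul]
  rw [hs]
  abel

end Aux

/-- **Empirical conditional mean embedding formula:** with empirical covariance
operator `Ĉ_XX f = (1/n) Σᵢ ⟪vᵢ, f⟫ vᵢ`, cross-covariance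
`Ĉ_YX f = (1/n) Σᵢ ⟪vᵢ, f⟫ wᵢ`, Gram matrix `K_{ij} = ⟪vᵢ, vⱼ⟫` and
`(k_u)ᵢ = ⟪vᵢ, u⟫`, the matrix `K + nλIₙ` is invertible, `Ĉ_XX + λ·id` is
bijective, and for the unique `h` with `(Ĉ_XX + λ·id) h = u` one has
`Ĉ_YX h = Σᵢ βᵢ wᵢ` with `β = (K + nλIₙ)⁻¹ k_u`. -/
theorem empirical_conditional_mean_embedding
    {H : Type*} [NormedAddCommGroup H] [InnerProductSpace ℝ H]
    {G : Type*} [NormedAddCommGroup G] [InnerProductSpace ℝ G]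
    (n : ℕ) (v : Fin n → H) (w : Fin n → G) (lam : ℝ) (hlam : 0 < lam) (u : H) :
    IsUnit ((Matrix.of fun i j => ⟪v i, v j⟫)
        + ((n : ℝ) * lam) • (1 : Matrix (Fin n) (Fin n) ℝ)) ∧
    Function.Bijective (fun f : H => ((n : ℝ)⁻¹ • ∑ i, ⟪v i, f⟫ • v i) + lam • f) ∧
    ∀ h : H, ((n : ℝ)⁻¹ • ∑ i, ⟪v i, h⟫ • v i) + lam • h = u →
      ((n : ℝ)⁻¹ • ∑ i, ⟪v i, h⟫ • w i)
        = ∑ i, (((Matrix.of fun i j => ⟪v i, v j⟫)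
              + ((n : ℝ) * lam) • (1 : Matrix (Fin n) (Fin n) ℝ))⁻¹.mulVec
                (fun i => ⟪v i, u⟫)) i • w i := by
  set M : Matrix (Fin n) (Fin n) ℝ :=
    (Matrix.of fun i j => ⟪v i, v j⟫) + ((n : ℝ) * lam) • 1 with hM
  have hPD : M.PosDef := aux_posDef n v lam hlam
  have hUnit : IsUnit M := hPD.isUnit
  have hdet : IsUnit M.det := (Matrix.isUnit_iff_isUnit_det M).mp hUnit
  have hMinj : Function.Injective (M.mulVec ·) :=
    Matrix.mulVec_injective_iff_isUnit.mpr hUnit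
  refine ⟨hUnit, ⟨?_, ?_⟩, ?_⟩
  · -- injectivity
    intro f₁ f₂ hf
    simp only at hf
    have hg : ((n : ℝ)⁻¹ • ∑ i, ⟪v i, f₁ - f₂⟫ • v i) + lam • (f₁ - f₂) = 0 := by
      have : ((n : ℝ)⁻¹ • ∑ i, ⟪v i, f₁ - f₂⟫ • v i) + lam • (f₁ - f₂)
          = (((n : ℝ)⁻¹ • ∑ i, ⟪v i, f₁⟫ • v i) + lam • f₁)
            - (((n : ℝ)⁻¹ • ∑ i, ⟪v i, f₂⟫ • v i) + lam • f₂) := by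
        simp only [inner_sub_right, sub_smul, Finset.sum_sub_distrib, smul_sub]
        abel
      rw [this, hf, sub_self]
    set g := f₁ - f₂ with hgdef
    have h0 : (0:ℝ) = (n : ℝ)⁻¹ * (∑ i, ⟪v i, g⟫ * ⟪v i, g⟫) + lam * ⟪g, g⟫ := by
      have := congrArg (fun z => ⟪z, g⟫) hg
      simpa [inner_add_left, real_inner_smul_left, sum_inner] using this.symm
    have h1 : (0:ℝ) ≤ (n : ℝ)⁻¹ * (∑ i, ⟪v i, g⟫ * ⟪v i, g⟫) := by
      apply mul_nonneg (by positivity)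
      exact Finset.sum_nonneg fun i _ => mul_self_nonneg _
    have h2 : (0:ℝ) ≤ ⟪g, g⟫ := real_inner_self_nonneg
    have h3 : ⟪g, g⟫ = 0 := by nlinarith
    have : g = 0 := by
      rwa [real_inner_self_eq_norm_sq, pow_eq_zero_iff (by norm_num),
        norm_eq_zero] at h3
    exact sub_eq_zero.mp this
  · -- surjectivity
    intro u'
    set β : Fin n → ℝ := M⁻¹.mulVec (fun i => ⟪v i, u'⟫) with hβdef
    have hβ : M *ᵥ β = fun i => ⟪v i, u'⟫ := by
      rw [hβdef, Matrix.mulVec_mulVec, Matrix.mul_nonsing_inv M hdet, Matrix.one_mulVec]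
    exact ⟨lam⁻¹ • (u' - ∑ j, β j • v j), aux_solve n v lam hlam u' β hβ⟩
  · -- the formula
    intro h hh
    set c : Fin n → ℝ := fun i => ⟪v i, h⟫ with hc
    have hkey : M *ᵥ ((n : ℝ)⁻¹ • c) = fun i => ⟪v i, u⟫ := by
      rw [hM, Matrix.add_mulVec, Matrix.smul_mulVec, Matrix.one_mulVec]
      funext i
      have hn : (n : ℝ) ≠ 0 := Nat.cast_ne_zero.mpr i.pos.ne'
      have hu : ⟪v i, u⟫ = (n : ℝ)⁻¹ * (∑ j, ⟪v i, v j⟫ * c j) + lam * c i := by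
        rw [← hh]
        simp only [inner_add_right, real_inner_smul_right, inner_sum]
        congr 1
        congr 1
        exact Finset.sum_congr rfl fun j _ => mul_comm _ _
      simp only [Matrix.mulVec, dotProduct, Matrix.of_apply, Pi.add_apply,
        Pi.smul_apply, smul_eq_mul]
      rw [hu, Finset.mul_sum]
      have h2 : ∑ j, ⟪v i, v j⟫ * ((n : ℝ)⁻¹ * c j)
          = ∑ j, (n : ℝ)⁻¹ * (⟪v i, v j⟫ * c j) :=
        Finset.sum_congr rfl fun j _ => by ring
      have h3 : (n : ℝ) * lam * ((n : ℝ)⁻¹ * c i) = lam * c i := by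
        field_simp
      rw [h2, h3]
    have hβeq : M⁻¹.mulVec (fun i => ⟪v i, u⟫) = (n : ℝ)⁻¹ • c := by
      apply hMinj
      simp only
      rw [Matrix.mulVec_mulVec, Matrix.mul_nonsing_inv M hdet, Matrix.one_mulVec, hkey]
    rw [hβeq, Finset.smul_sum]
    exact Finset.sum_congr rfl fun i _ => by
      simp [smul_smul, hc]
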